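/- arXiv:0711.2115 — 8 statements merged into one kernel-verified Lean document; each statement's English description precedes it below -/
import Mathlib

section
/- A finite lattice is lower locally distributive (i.e., lower semi-modular and containing no sublattice isomorphic to M_3) if and only if every element has a unique minimal (irredundant) decomposition as a supremum of join-irreducible elements. -/
set_option linter.unusedSectionVars false


/-- Lower semi-modularity: if `x ⊔ y` covers both `x` and `y`, then both `x` and `y`
cover `x ⊓ y`. -/
def LowerSemimodular (L : Type*) [Lattice L] : Prop :=
  ∀ x y : L, x ⋖ x ⊔ y → y ⋖ x ⊔ y → (x ⊓ y ⋖ x ∧ x ⊓ y ⋖ y)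

/-- `L` contains a sublattice isomorphic to the diamond `M₃`. -/
def HasM3 (L : Type*) [Lattice L] : Prop :=
  ∃ b m₁ m₂ m₃ t : L,
    b ≠ m₁ ∧ b ≠ m₂ ∧ b ≠ m₃ ∧ b ≠ t ∧ m₁ ≠ m₂ ∧ m₁ ≠ m₃ ∧ m₂ ≠ m₃ ∧
    m₁ ≠ t ∧ m₂ ≠ t ∧ m₃ ≠ t ∧
    m₁ ⊓ m₂ = b ∧ m₁ ⊓ m₃ = b ∧ m₂ ⊓ m₃ = b ∧
    m₁ ⊔ m₂ = t ∧ m₁ ⊔ m₃ = t ∧ m₂ ⊔ m₃ = t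

open Finset

theorem Finset.exists_maximal_old {α : Type*} [Preorder α] (s : Finset α) (h : s.Nonempty) :
    ∃ m ∈ s, ∀ x ∈ s, ¬ m < x := by
  obtain ⟨m, hm⟩ := Finset.exists_maximal h
  exact ⟨m, hm.1, fun x hx hlt => hlt.not_ge (hm.2 hx hlt.le)⟩

theorem Finset.exists_minimal_old {α : Type*} [Preorder α] (s : Finset α) (h : s.Nonempty) :
    ∃ m ∈ s, ∀ x ∈ s, ¬ x < m := by
  obtain ⟨m, hm⟩ := Finset.exists_minimal h
  exact ⟨m, hm.1, fun x hx hlt => hlt.not_ge (hm.2 hx hlt.le)⟩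

section Aux

variable {L : Type*} [Lattice L] [Fintype L] [DecidableEq L]

/-- The minimal decomposition predicate from the statement. -/
abbrev MinDecomp (x : L) (S : Finset L) : Prop :=
  (∀ i ∈ S, SupIrred i) ∧ IsLUB (S : Set L) x ∧ ∀ T ⊂ S, ¬ IsLUB (T : Set L) x

noncomputable def fintypeOrderBot (L : Type*) [Lattice L] [Fintype L] [Nonempty L] :
    OrderBot L where
  bot := Finset.univ.inf' Finset.univ_nonempty id
  bot_le a := Finset.inf'_le id (Finset.mem_univ a)

lemma isLUB_coe_sup [OrderBot L] (S : Finset L) : IsLUB (S : Set L) (S.sup id) := by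
  constructor
  · intro a ha
    exact Finset.le_sup (f := id) (Finset.mem_coe.1 ha)
  · intro b hb
    exact Finset.sup_le fun a ha => hb (Finset.mem_coe.2 ha)

lemma exists_le_covby {a b : L} (h : a < b) : ∃ c, a ≤ c ∧ c ⋖ b := by
  classical
  obtain ⟨c, hc, hmax⟩ := Finset.exists_maximal_old
    (Finset.univ.filter fun t => a ≤ t ∧ t < b) ⟨a, by simp [h]⟩
  simp only [Finset.mem_filter, Finset.mem_univ, true_and] at hc hmax
  refine ⟨c, hc.1, hc.2, ?_⟩
  intro d hcd hdb
  exact hmax d ⟨hc.1.trans hcd.le, hdb⟩ hcd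

lemma sup_of_covby {u c d : L} (hc : c ⋖ u) (hd : d ⋖ u) (hne : c ≠ d) : c ⊔ d = u := by
  have hdc : ¬ d ≤ c := by
    intro h
    rcases h.lt_or_eq with h' | h'
    · exact hd.2 h' hc.lt
    · exact hne h'.symm
  have h1 : c < c ⊔ d := lt_of_le_of_ne le_sup_left (fun h => hdc (h ▸ le_sup_right))
  have h2 : c ⊔ d ≤ u := sup_le hc.lt.le hd.lt.le
  rcases h2.lt_or_eq with h' | h'
  · exact absurd h' (hc.2 h1)
  · exact h'

lemma le_of_forall_supIrred_le [OrderBot L] (p : L) :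
    ∀ z : L, (∀ i, SupIrred i → i ≤ p → i ≤ z) → p ≤ z := by
  induction p using WellFoundedLT.induction with
  | _ p ih =>
    intro z h
    by_cases hm : IsMin p
    · rw [hm.eq_bot]; exact bot_le
    by_cases hi : SupIrred p
    · exact h p hi le_rfl
    · rw [SupIrred] at hi
      push_neg at hi
      obtain ⟨b, c, hbc, hb, hc⟩ := hi hm
      have hbp : b < p := lt_of_le_of_ne (hbc ▸ le_sup_left) hb
      have hcp : c < p := lt_of_le_of_ne (hbc ▸ le_sup_right) hc
      have h1 := ih b hbp z (fun i hiI hib => h i hiI (hib.trans hbp.le))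
      have h2 := ih c hcp z (fun i hiI hic => h i hiI (hic.trans hcp.le))
      rw [← hbc]
      exact sup_le h1 h2

lemma exists_decomp [OrderBot L] (x : L) :
    ∃ A : Finset L, (∀ i ∈ A, SupIrred i) ∧ IsLUB (A : Set L) x := by
  induction x using WellFoundedLT.induction with
  | _ x ih =>
    by_cases hm : IsMin x
    · refine ⟨∅, by simp, ?_⟩
      rw [hm.eq_bot]
      simpa using isLUB_empty
    by_cases hi : SupIrred x
    · exact ⟨{x}, by simp [hi], by simpa using isLUB_singleton⟩
    · rw [SupIrred] at hi
      push_neg at hi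
      obtain ⟨b, c, hbc, hb, hc⟩ := hi hm
      have hbp : b < x := lt_of_le_of_ne (hbc ▸ le_sup_left) hb
      have hcp : c < x := lt_of_le_of_ne (hbc ▸ le_sup_right) hc
      obtain ⟨B, hB1, hB2⟩ := ih b hbp
      obtain ⟨C, hC1, hC2⟩ := ih c hcp
      refine ⟨B ∪ C, ?_, ?_⟩
      · intro i hiI
        rcases Finset.mem_union.1 hiI with h | h
        · exact hB1 i h
        · exact hC1 i h
      · rw [Finset.coe_union, ← hbc]
        exact hB2.union hC2

lemma shrink {A : Finset L} {x : L} (h1 : ∀ i ∈ A, SupIrred i) (h2 : IsLUB (A : Set L) x) :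
    ∃ S, S ⊆ A ∧ MinDecomp x S := by
  classical
  obtain ⟨S, hS, hmin⟩ := Finset.exists_minimal_old
    ((A.powerset).filter fun B : Finset L => IsLUB (↑B : Set L) x) ⟨A, by simp [h2]⟩
  simp only [Finset.mem_filter, Finset.mem_powerset] at hS hmin
  refine ⟨S, hS.1, fun i hi => h1 i (hS.1 hi), hS.2, ?_⟩
  intro T hT hTl
  exact hmin T ⟨hT.subset.trans hS.1, hTl⟩ hT

/-- The anti-exchange property, the heart of the forward direction. -/
lemma ae [OrderBot L] (hLSM : LowerSemimodular L) (hM3 : ¬HasM3 L) :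
    ∀ u z j k : L, z ⋖ u → SupIrred j → SupIrred k → j ≤ u → k ≤ u →
      ¬j ≤ z → ¬k ≤ z → j = k := by
  intro u
  induction u using WellFoundedLT.induction with
  | _ u ih =>
    intro z j k hz hj hk hju hku hjz hkz
    by_contra hne
    have hcov : ∀ c : L, c ⋖ u → c ≠ z → (z ⊓ c ⋖ z ∧ z ⊓ c ⋖ c) := by
      intro c hc hczne
      have hzc : z ⊔ c = u := sup_of_covby hz hc (fun h => hczne h.symm)
      have h1 : z ⋖ z ⊔ c := by rw [hzc]; exact hz
      have h2 : c ⋖ z ⊔ c := by rw [hzc]; exact hc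
      exact hLSM z c h1 h2
    have top_case : ∀ a b : L, SupIrred a → a = u → b ≤ u → ¬ b ≤ z → a ≠ b → False := by
      intro a b ha hau hbu hbz hab
      have hblt : b < u := lt_of_le_of_ne hbu (fun h => hab (hau.trans h.symm))
      obtain ⟨c, hbc, hcu⟩ := exists_le_covby hblt
      have hcz : c ≠ z := fun h => hbz (h ▸ hbc)
      have hzcu : z ⊔ c = u := sup_of_covby hz hcu (fun h => hcz h.symm)
      rcases (hau ▸ ha).2 hzcu with h' | h'
      · exact hz.lt.ne h'
      · exact hcu.lt.ne h'
    have hjlt : j < u := by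
      rcases hju.lt_or_eq with h | h
      · exact h
      · exact absurd (top_case j k hj h hku hkz hne) (fun t => t)
    have hklt : k < u := by
      rcases hku.lt_or_eq with h | h
      · exact h
      · exact absurd (top_case k j hk h hju hjz (Ne.symm hne)) (fun t => t)
    obtain ⟨v, hjv, hv⟩ := exists_le_covby hjlt
    obtain ⟨w, hkw, hw⟩ := exists_le_covby hklt
    have hvz : v ≠ z := fun h => hjz (h ▸ hjv)
    have hwz : w ≠ z := fun h => hkz (h ▸ hkw)
    by_cases hkv : k ≤ v
    · exact hne (ih v hv.lt (z ⊓ v) j k (hcov v hv hvz).2 hj hk hjv hkv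
        (fun h => hjz (h.trans inf_le_left)) (fun h => hkz (h.trans inf_le_left)))
    by_cases hjw : j ≤ w
    · exact hne (ih w hw.lt (z ⊓ w) j k (hcov w hw hwz).2 hj hk hjw hkw
        (fun h => hjz (h.trans inf_le_left)) (fun h => hkz (h.trans inf_le_left)))
    have hvw : v ≠ w := fun h => hkv (h ▸ hkw)
    have hvwu : v ⊔ w = u := sup_of_covby hv hw hvw
    have hr : v ⊓ w ⋖ v ∧ v ⊓ w ⋖ w :=
      hLSM v w (by rw [hvwu]; exact hv) (by rw [hvwu]; exact hw)
    have hpz := (hcov v hv hvz).1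
    have hpv := (hcov v hv hvz).2
    have hqz := (hcov w hw hwz).1
    by_cases hpr : z ⊓ v = v ⊓ w
    · -- build an M₃
      have hpq : z ⊓ v = z ⊓ w := by
        have hle : z ⊓ v ≤ z ⊓ w := le_inf inf_le_left (by rw [hpr]; exact inf_le_right)
        rcases hle.lt_or_eq with h' | h'
        · exact absurd hqz.lt (hpz.2 h')
        · exact h'
      exact hM3 ⟨z ⊓ v, z, v, w, u, hpz.lt.ne, hpv.lt.ne,
        (by rw [hpr]; exact hr.2.lt.ne), (hpz.lt.trans hz.lt).ne,
        (fun h => hvz h.symm), (fun h => hwz h.symm), hvw,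
        hz.lt.ne, hv.lt.ne, hw.lt.ne,
        rfl, hpq.symm, hpr.symm,
        sup_of_covby hz hv (fun h => hvz h.symm),
        sup_of_covby hz hw (fun h => hwz h.symm), hvwu⟩
    · have hnple : ¬ z ⊓ v ≤ v ⊓ w := by
        intro h
        rcases h.lt_or_eq with h' | h'
        · exact hpv.2 h' hr.1.lt
        · exact hpr h'
      obtain ⟨i, hiI, hip, hir⟩ : ∃ i, SupIrred i ∧ i ≤ z ⊓ v ∧ ¬ i ≤ v ⊓ w := by
        by_contra h
        push_neg at h
        exact hnple (le_of_forall_supIrred_le _ _ h)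
      have hij : i = j := ih v hv.lt (v ⊓ w) i j hr.1 hiI hj (hip.trans inf_le_right) hjv hir
        (fun h => hjw (h.trans inf_le_right))
      exact hjz (hij ▸ (hip.trans inf_le_left))

lemma minDecomp_subset [OrderBot L]
    (hP : ∀ u z j k : L, z ⋖ u → SupIrred j → SupIrred k → j ≤ u → k ≤ u →
      ¬j ≤ z → ¬k ≤ z → j = k)
    {x : L} {S T : Finset L} (hS : MinDecomp x S) (hT : MinDecomp x T) : S ⊆ T := by
  classical
  intro s hs
  by_contra hsT
  have hsx : s ≤ x := hS.2.1.1 (Finset.mem_coe.2 hs)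
  have hxsup : x = S.sup id := hS.2.1.unique (isLUB_coe_sup S)
  set zs : L := (S.erase s).sup id with hzs
  have hx_eq : x = s ⊔ zs := by
    conv_lhs => rw [hxsup, ← Finset.insert_erase hs]
    rw [Finset.sup_insert]
    rfl
  have hzsx : zs ≤ x := Finset.sup_le fun a ha => hS.2.1.1 (Finset.mem_coe.2 (Finset.mem_of_mem_erase ha))
  have hszs : ¬ s ≤ zs := by
    intro h
    have hxz : x = zs := by rw [hx_eq, sup_eq_right.2 h]
    exact hS.2.2 (S.erase s) (Finset.erase_ssubset hs) (hxz ▸ isLUB_coe_sup (S.erase s))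
  obtain ⟨z, hzZ, hzmax⟩ := Finset.exists_maximal_old
    (Finset.univ.filter fun z => zs ≤ z ∧ z ≤ x ∧ ¬ s ≤ z)
    ⟨zs, by simp [hzsx, hszs]⟩
  simp only [Finset.mem_filter, Finset.mem_univ, true_and] at hzZ hzmax
  obtain ⟨hz1, hz2, hz3⟩ := hzZ
  obtain ⟨q, hqI, hqx, hqs, hqz⟩ : ∃ q, SupIrred q ∧ q ≤ x ∧ q ≠ s ∧ ¬ q ≤ z := by
    by_contra h
    push_neg at h
    have hxz : x ≤ z := by
      have hxt : x = T.sup id := hT.2.1.unique (isLUB_coe_sup T)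
      rw [hxt]
      refine Finset.sup_le fun t ht => h t (hT.1 t ht) (hT.2.1.1 (Finset.mem_coe.2 ht)) ?_
      exact fun he => hsT (he ▸ ht)
    exact hz3 (hsx.trans hxz)
  have hzq : z < z ⊔ q := lt_of_le_of_ne le_sup_left (fun h => hqz (h ▸ le_sup_right))
  have hsu : s ≤ z ⊔ q := by
    by_contra hns
    exact hzmax (z ⊔ q) ⟨hz1.trans le_sup_left, sup_le hz2 hqx, hns⟩ hzq
  have hqzs : q ≤ z ⊔ s := by
    refine hqx.trans ?_
    rw [hx_eq]
    exact sup_le le_sup_right (hz1.trans le_sup_left)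
  have heq : z ⊔ s = z ⊔ q := le_antisymm (sup_le le_sup_left hsu) (sup_le le_sup_left hqzs)
  have hlt : z < z ⊔ s := heq ▸ hzq
  obtain ⟨z'', hz''1, hz''2⟩ := exists_le_covby hlt
  have hsz'' : ¬ s ≤ z'' := fun h => hz''2.lt.ne (le_antisymm hz''2.lt.le (sup_le hz''1 h))
  have hqz'' : ¬ q ≤ z'' := fun h =>
    hz''2.lt.ne (le_antisymm hz''2.lt.le (heq ▸ sup_le hz''1 h))
  exact hqs ((hP (z ⊔ s) z'' s q hz''2 (hS.1 s hs) hqI le_sup_right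
    (by rw [heq]; exact le_sup_right) hsz'' hqz'')).symm

lemma lsm_aux [OrderBot L] (hU : ∀ x : L, ∃! S : Finset L, MinDecomp x S) (x y : L)
    (hx : x ⋖ x ⊔ y) (hy : y ⋖ x ⊔ y) : x ⊓ y ⋖ x := by
  classical
  by_contra hcov
  have hxy : ¬ x ≤ y := by
    intro h
    rw [sup_eq_right.2 h] at hy
    exact hy.lt.ne rfl
  have ha : x ⊓ y < x := lt_of_le_of_ne inf_le_left (fun h => hxy (by rw [← h]; exact inf_le_right))
  obtain ⟨m, ham, hmx⟩ : ∃ m, x ⊓ y < m ∧ m < x := by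
    by_contra h
    push_neg at h
    exact hcov ⟨ha, fun c hc => h c hc⟩
  obtain ⟨X, hXi, hXl⟩ := exists_decomp x
  obtain ⟨e, heX, hem⟩ : ∃ e ∈ X, ¬ e ≤ m := by
    by_contra h
    push_neg at h
    exact hmx.not_ge (hXl.2 fun a ha => h a (Finset.mem_coe.1 ha))
  have hex : e ≤ x := hXl.1 (Finset.mem_coe.2 heX)
  have hey : ¬ e ≤ y := fun h => hem ((le_inf hex h).trans ham.le)
  have hmy : ¬ m ≤ y := fun h => (lt_irrefl _) (ham.trans_le (le_inf hmx.le h))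
  have heyb : e ⊔ y = x ⊔ y := by
    have h1 : y < e ⊔ y := lt_of_le_of_ne le_sup_right (fun h => hey (h ▸ le_sup_left))
    have h2 : e ⊔ y ≤ x ⊔ y := sup_le (hex.trans le_sup_left) le_sup_right
    rcases h2.lt_or_eq with h' | h'
    · exact absurd h' (hy.2 h1)
    · exact h'
  have hmyb : m ⊔ y = x ⊔ y := by
    have h1 : y < m ⊔ y := lt_of_le_of_ne le_sup_right (fun h => hmy (h ▸ le_sup_left))
    have h2 : m ⊔ y ≤ x ⊔ y := sup_le (hmx.le.trans le_sup_left) le_sup_right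
    rcases h2.lt_or_eq with h' | h'
    · exact absurd h' (hy.2 h1)
    · exact h'
  obtain ⟨Y, hYi, hYl⟩ := exists_decomp y
  obtain ⟨D, hDi, hDl⟩ := exists_decomp m
  have lU : IsLUB ((insert e Y : Finset L) : Set L) (x ⊔ y) := by
    rw [Finset.coe_insert, ← heyb]
    exact hYl.insert e
  have lV : IsLUB ((D ∪ Y : Finset L) : Set L) (x ⊔ y) := by
    rw [Finset.coe_union, ← hmyb]
    exact hDl.union hYl
  obtain ⟨U, hUsub, hUmd⟩ := shrink (fun i hi => by
    rcases Finset.mem_insert.1 hi with h | h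
    · exact h ▸ hXi e heX
    · exact hYi i h) lU
  obtain ⟨V, hVsub, hVmd⟩ := shrink (fun i hi => by
    rcases Finset.mem_union.1 hi with h | h
    · exact hDi i h
    · exact hYi i h) lV
  obtain ⟨W, _, hWu⟩ := hU (x ⊔ y)
  have hUV : U = V := (hWu U hUmd).trans (hWu V hVmd).symm
  have heU : e ∈ U := by
    by_contra h
    have hUY : U ⊆ Y := fun a haU => by
      rcases Finset.mem_insert.1 (hUsub haU) with h' | h'
      · exact absurd (h' ▸ haU) h
      · exact h'
    have hby : x ⊔ y ≤ y := hUmd.2.1.2 fun a ha => hYl.1 (Finset.mem_coe.2 (hUY (Finset.mem_coe.1 ha)))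
    exact hy.lt.not_ge hby
  have heV : e ∈ V := hUV ▸ heU
  rcases Finset.mem_union.1 (hVsub heV) with hD | hY
  · exact hem (hDl.1 (Finset.mem_coe.2 hD))
  · exact hey (hYl.1 (Finset.mem_coe.2 hY))

lemma noM3_aux [OrderBot L] (hU : ∀ x : L, ∃! S : Finset L, MinDecomp x S)
    {b m1 m2 m3 t : L} (hbt : b ≠ t)
    (h12 : m1 ⊓ m2 = b) (h13 : m1 ⊓ m3 = b) (h23 : m2 ⊓ m3 = b)
    (j12 : m1 ⊔ m2 = t) (j13 : m1 ⊔ m3 = t) (j23 : m2 ⊔ m3 = t) : False := by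
  classical
  obtain ⟨S1, hS1i, hS1l⟩ := exists_decomp m1
  obtain ⟨S2, hS2i, hS2l⟩ := exists_decomp m2
  obtain ⟨S3, hS3i, hS3l⟩ := exists_decomp m3
  have l12 : IsLUB ((S1 ∪ S2 : Finset L) : Set L) t := by
    rw [Finset.coe_union, ← j12]; exact hS1l.union hS2l
  have l13 : IsLUB ((S1 ∪ S3 : Finset L) : Set L) t := by
    rw [Finset.coe_union, ← j13]; exact hS1l.union hS3l
  have l23 : IsLUB ((S2 ∪ S3 : Finset L) : Set L) t := by
    rw [Finset.coe_union, ← j23]; exact hS2l.union hS3l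
  have irr12 : ∀ i ∈ S1 ∪ S2, SupIrred i := fun i hi => by
    rcases Finset.mem_union.1 hi with h | h
    · exact hS1i i h
    · exact hS2i i h
  have irr13 : ∀ i ∈ S1 ∪ S3, SupIrred i := fun i hi => by
    rcases Finset.mem_union.1 hi with h | h
    · exact hS1i i h
    · exact hS3i i h
  have irr23 : ∀ i ∈ S2 ∪ S3, SupIrred i := fun i hi => by
    rcases Finset.mem_union.1 hi with h | h
    · exact hS2i i h
    · exact hS3i i h
  obtain ⟨U12, hsub12, hmd12⟩ := shrink irr12 l12
  obtain ⟨U13, hsub13, hmd13⟩ := shrink irr13 l13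
  obtain ⟨U23, hsub23, hmd23⟩ := shrink irr23 l23
  obtain ⟨W, hW, hWu⟩ := hU t
  have e12 : U12 = W := hWu U12 hmd12
  have e13 : U13 = W := hWu U13 hmd13
  have e23 : U23 = W := hWu U23 hmd23
  have hble : t ≤ b := by
    refine hW.2.1.2 fun w hw => ?_
    have hw' : w ∈ W := Finset.mem_coe.1 hw
    have d12 : w ≤ m1 ∨ w ≤ m2 := by
      rcases Finset.mem_union.1 (hsub12 (e12 ▸ hw')) with h | h
      · exact Or.inl (hS1l.1 (Finset.mem_coe.2 h))
      · exact Or.inr (hS2l.1 (Finset.mem_coe.2 h))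
    have d13 : w ≤ m1 ∨ w ≤ m3 := by
      rcases Finset.mem_union.1 (hsub13 (e13 ▸ hw')) with h | h
      · exact Or.inl (hS1l.1 (Finset.mem_coe.2 h))
      · exact Or.inr (hS3l.1 (Finset.mem_coe.2 h))
    have d23 : w ≤ m2 ∨ w ≤ m3 := by
      rcases Finset.mem_union.1 (hsub23 (e23 ▸ hw')) with h | h
      · exact Or.inl (hS2l.1 (Finset.mem_coe.2 h))
      · exact Or.inr (hS3l.1 (Finset.mem_coe.2 h))
    rcases d12 with h1 | h2
    · rcases d23 with h2 | h3
      · exact h12 ▸ le_inf h1 h2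
      · exact h13 ▸ le_inf h1 h3
    · rcases d13 with h1 | h3
      · exact h12 ▸ le_inf h1 h2
      · exact h23 ▸ le_inf h2 h3
  have hblt : b ≤ t := by
    rw [← h12, ← j12]
    exact inf_le_left.trans le_sup_left
  exact hbt (le_antisymm hblt hble)

end Aux

/-- Dilworth: a finite lattice is lower locally distributive (lower semi-modular and
with no `M₃` sublattice) iff every element has a unique minimal (irredundant)
decomposition as a supremum of join-irreducible elements. -/
theorem lowerLocallyDistributive_iff_unique_minimal_decomposition
    (L : Type*) [Lattice L] [Fintype L] [DecidableEq L] :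
    (LowerSemimodular L ∧ ¬ HasM3 L) ↔
      ∀ x : L, ∃! S : Finset L,
        (∀ i ∈ S, SupIrred i) ∧ IsLUB (S : Set L) x ∧
          ∀ T ⊂ S, ¬ IsLUB (T : Set L) x := by
  classical
  constructor
  · rintro ⟨hLSM, hM3⟩ x
    have : Nonempty L := ⟨x⟩
    letI : OrderBot L := fintypeOrderBot L
    obtain ⟨A, hA1, hA2⟩ := exists_decomp x
    obtain ⟨S, _, hS⟩ := shrink hA1 hA2
    refine ⟨S, hS, ?_⟩
    intro S' hS'
    exact Finset.Subset.antisymm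
      (minDecomp_subset (ae hLSM hM3) hS' hS)
      (minDecomp_subset (ae hLSM hM3) hS hS')
  · intro hU
    constructor
    · intro x y hx hy
      have : Nonempty L := ⟨x⟩
      letI : OrderBot L := fintypeOrderBot L
      refine ⟨lsm_aux hU x y hx hy, ?_⟩
      rw [inf_comm]
      rw [sup_comm] at hx hy
      exact lsm_aux hU y x hy hx
    · rintro ⟨b, m1, m2, m3, t, _, _, _, hbt, _, _, _, _, _, _,
        h12, h13, h23, j12, j13, j23⟩
      have : Nonempty L := ⟨b⟩
      letI : OrderBot L := fintypeOrderBot L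
      exact noM3_aux hU hbt h12 h13 h23 j12 j13 j23
end

section
/- Let L be a finite lattice, x ∈ L, and y with minimal join-irreducible decomposition η*(y). If η(x) ∩ η*(y) ≠ ∅, then the iterated derivative Δ_y f(x) = 0 for every f : L → ℝ. -/
/-- Lower locally distributive: lower semi-modular and no `M₃` sublattice. -/
def LowerLocallyDistributive (L : Type*) [Lattice L] : Prop :=
  LowerSemimodular L ∧ ¬ HasM3 L

/-- The derivative of `f` w.r.t. `i` at `x`: `Δ_i f(x) = f(x ⊔ i) - f(x)`. -/
def deriv' {L : Type*} [Lattice L] (i : L) (f : L → ℝ) : L → ℝ :=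
  fun x => f (x ⊔ i) - f x

/-- Iterated derivative w.r.t. a list of (join-irreducible) elements. -/
def derivList {L : Type*} [Lattice L] (l : List L) (f : L → ℝ) : L → ℝ :=
  l.foldr deriv' f


theorem derivList_aux {L : Type*} [Lattice L] (l : List L) :
    ∀ (f : L → ℝ) (x : L), (∃ i ∈ l, i ≤ x) → derivList l f x = 0 := by
  induction l with
  | nil => rintro f x ⟨i, hi, -⟩; exact absurd hi List.not_mem_nil
  | cons a t ih =>
    rintro f x ⟨i, hi, hix⟩
    show deriv' a (derivList t f) x = 0
    rcases List.mem_cons.mp hi with rfl | hit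
    · simp [deriv', sup_eq_left.mpr hix]
    · simp [deriv', ih f (x ⊔ a) ⟨i, hit, hix.trans le_sup_left⟩,
        ih f x ⟨i, hit, hix⟩]

/-- If the minimal join-irreducible decomposition `η*(y)` of `y` meets `η(x)`
(i.e. some element of it lies below `x`), then the iterated derivative
`Δ_y f(x)` vanishes. -/
theorem derivList_eq_zero_of_inter (L : Type*) [Lattice L] [Fintype L] [DecidableEq L]
    (hL : LowerLocallyDistributive L) (f : L → ℝ) (x y : L)
    (l : List L) (hnd : l.Nodup)
    (hirr : ∀ i ∈ l, SupIrred i)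
    (hlub : IsLUB (↑l.toFinset : Set L) y)
    (hmin : ∀ T ⊂ l.toFinset, ¬ IsLUB (↑T : Set L) y)
    (hmeet : ∃ i ∈ l, i ≤ x) :
    derivList l f x = 0 := by
  exact derivList_aux l f x hmeet
end

section
/- Let L be a finite distributive lattice, f : L → ℝ with Möbius transform m (the unique function satisfying f(x) = Σ_{y≤x} m(y)), and i a join-irreducible element such that x∨i covers x. Then Δ_i f(x) = Σ_{y ∈ [i, x∨i]} m(y). -/
open scoped Classical

/-- If `m` is the Möbius transform of `f` on a finite distributive lattice and `x ⊔ i`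
covers `x` for a join-irreducible `i`, then
`Δ_i f(x) = f(x ⊔ i) − f(x) = Σ_{y ∈ [i, x ⊔ i]} m(y)`. -/
theorem deriv_eq_sum_mobius (L : Type*) [DistribLattice L] [Fintype L]
    (f m : L → ℝ)
    (hm : ∀ x : L, f x = ∑ y ∈ Finset.univ.filter (fun y => y ≤ x), m y)
    (i x : L) (hi : SupIrred i) (hcov : x ⋖ x ⊔ i) :
    f (x ⊔ i) - f x = ∑ y ∈ Finset.univ.filter (fun y => i ≤ y ∧ y ≤ x ⊔ i), m y := by
  have hxlt : x < x ⊔ i := hcov.lt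
  have hkey : ∀ y : L, y ≤ x ⊔ i → (¬ y ≤ x ↔ i ≤ y) := by
    intro y hy
    constructor
    · intro hyx
      have hle : x ⊔ y ≤ x ⊔ i := sup_le le_sup_left hy
      rcases hcov.eq_or_eq (le_sup_left : x ≤ x ⊔ y) hle with h | h
      · exact absurd (h ▸ le_sup_right : y ≤ x) hyx
      · have heq : i ⊓ x ⊔ i ⊓ y = i := by
          rw [← inf_sup_left, h]; exact inf_eq_left.mpr le_sup_right
        rcases hi.2 heq with h2 | h2
        · have hix : i ≤ x := h2 ▸ inf_le_right
          exact absurd (sup_le le_rfl hix) (hxlt.not_ge)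
        · exact h2 ▸ inf_le_right
    · intro hiy hyx
      exact absurd (sup_le le_rfl (hiy.trans hyx)) (hxlt.not_ge)
  rw [hm, hm]
  have hsub : Finset.univ.filter (fun y => y ≤ x) ⊆
      Finset.univ.filter (fun y : L => y ≤ x ⊔ i) := by
    intro y hy
    simp only [Finset.mem_filter, Finset.mem_univ, true_and] at *
    exact hy.trans le_sup_left
  rw [← Finset.sum_sdiff_eq_sub hsub]
  congr 1
  ext y
  simp only [Finset.mem_sdiff, Finset.mem_filter, Finset.mem_univ, true_and]
  constructor
  · rintro ⟨h1, h2⟩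
    exact ⟨(hkey y h1).mp h2, h1⟩
  · rintro ⟨h1, h2⟩
    exact ⟨h2, (hkey y h2).mpr h1⟩
end

section
/- Let L be a finite distributive lattice, f : L → ℝ with Möbius transform m, and x, y ∈ L such that the iterated derivative Δ_y f(x) is Boolean (the interval [x, x∨y] is isomorphic to 2^{|η*(y)|}). Then Δ_y f(x) = Σ_{z ∈ [y, x∨y]} m(z). -/
open scoped Classical

private lemma derivList_expand {L : Type*} [Lattice L] [OrderBot L] [DecidableEq L]
    (f : L → ℝ) (l : List L) (hnd : l.Nodup) (x : L) :
    derivList l f x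
      = ∑ T ∈ l.toFinset.powerset, (-1:ℝ)^(l.length - T.card) * f (x ⊔ T.sup id) := by
  induction l generalizing x with
  | nil => simp [derivList]
  | cons i l' ih =>
    have hnd' : l'.Nodup := (List.nodup_cons.1 hnd).2
    have hi : i ∉ l'.toFinset := by
      simpa using (List.nodup_cons.1 hnd).1
    have hcard : l'.toFinset.card = l'.length := List.toFinset_card_of_nodup hnd'
    have h0 : derivList (i :: l') f x = derivList l' f (x ⊔ i) - derivList l' f x := rfl
    rw [h0, ih hnd' (x ⊔ i), ih hnd' x]
    rw [show (i :: l').toFinset = insert i l'.toFinset from List.toFinset_cons ..]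
    rw [Finset.sum_powerset_insert hi]
    have e1 : ∀ T ∈ l'.toFinset.powerset,
        (-1:ℝ)^((i :: l').length - T.card) * f (x ⊔ T.sup id)
          = -((-1:ℝ)^(l'.length - T.card) * f (x ⊔ T.sup id)) := by
      intro T hT
      have hc : T.card ≤ l'.length := hcard ▸ Finset.card_le_card (Finset.mem_powerset.1 hT)
      rw [List.length_cons, Nat.succ_sub hc, pow_succ]
      ring
    have e2 : ∀ T ∈ l'.toFinset.powerset,
        (-1:ℝ)^((i :: l').length - (insert i T).card) * f (x ⊔ (insert i T).sup id)
          = (-1:ℝ)^(l'.length - T.card) * f ((x ⊔ i) ⊔ T.sup id) := by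
      intro T hT
      have hiT : i ∉ T := fun h => hi (Finset.mem_powerset.1 hT h)
      rw [Finset.card_insert_of_notMem hiT, List.length_cons, Nat.succ_sub_succ,
        Finset.sup_insert]
      simp only [id]
      rw [← sup_assoc]
    rw [Finset.sum_congr rfl e1, Finset.sum_congr rfl e2, Finset.sum_neg_distrib]
    ring

/-- If the iterated derivative `Δ_y f(x)` is Boolean (the interval `[x, x ⊔ y]` is
isomorphic to `2^{|η*(y)|}`), then `Δ_y f(x) = Σ_{z ∈ [y, x ⊔ y]} m(z)`, where `m`
is the Möbius transform of `f`. -/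
theorem derivList_eq_sum_mobius (L : Type*) [DistribLattice L] [Fintype L] [DecidableEq L]
    (f m : L → ℝ)
    (hm : ∀ w : L, f w = ∑ z ∈ Finset.univ.filter (fun z => z ≤ w), m z)
    (x y : L) (l : List L) (hnd : l.Nodup)
    (hirr : ∀ i ∈ l, SupIrred i)
    (hlub : IsLUB (↑l.toFinset : Set L) y)
    (hmin : ∀ T ⊂ l.toFinset, ¬ IsLUB (↑T : Set L) y)
    (hbool : Nonempty ((Set.Icc x (x ⊔ y)) ≃o Finset (Fin l.length))) :
    derivList l f x = ∑ z ∈ Finset.univ.filter (fun z => y ≤ z ∧ z ≤ x ⊔ y), m z := by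
  classical
  obtain ⟨φ⟩ := hbool
  haveI : Nonempty L := ⟨x⟩
  letI : OrderBot L := Fintype.toOrderBot L
  rw [derivList_expand f l hnd x]
  set F := l.toFinset with hF
  set n := l.length with hn
  have hcard : F.card = n := List.toFinset_card_of_nodup hnd
  have hyF : ∀ i ∈ F, i ≤ y := fun i hi => hlub.1 (Finset.mem_coe.2 hi)
  have hyle : ∀ z : L, (∀ i ∈ F, i ≤ z) → y ≤ z :=
    fun z h => hlub.2 fun a ha => h a (Finset.mem_coe.1 ha)
  have hprime : ∀ i ∈ F, SupPrime i :=
    fun i hi => supPrime_iff_supIrred.2 (hirr i (List.mem_toFinset.1 hi))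
  -- incomparability
  have hinc : ∀ i ∈ F, ∀ j ∈ F, i ≠ j → ¬ i ≤ j := by
    intro i hi j hj hne hle
    refine hmin (F.erase i) (Finset.erase_ssubset hi) ⟨?_, ?_⟩
    · intro a ha
      exact hyF a (Finset.mem_of_mem_erase (Finset.mem_coe.1 ha))
    · intro b hb
      refine hyle b fun a ha => ?_
      by_cases hai : a = i
      · subst hai
        exact hle.trans (hb (Finset.mem_coe.2 (Finset.mem_erase.2 ⟨hne.symm, hj⟩)))
      · exact hb (Finset.mem_coe.2 (Finset.mem_erase.2 ⟨hai, ha⟩))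
  -- elements of the interval
  have hxy : x ∈ Set.Icc x (x ⊔ y) := ⟨le_rfl, le_sup_left⟩
  set I := Set.Icc x (x ⊔ y)
  have humem : ∀ i : L, x ⊔ (i ⊓ y) ∈ I :=
    fun i => ⟨le_sup_left, sup_le le_sup_left (le_trans inf_le_right le_sup_right)⟩
  set u : L → I := fun i => ⟨x ⊔ (i ⊓ y), humem i⟩ with hu
  have hucoe : ∀ i ∈ F, ((u i : I) : L) = x ⊔ i := by
    intro i hi
    simp only [hu]
    rw [inf_eq_left.2 (hyF i hi)]
  set A : L → Finset (Fin n) := fun i => φ (u i) with hA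
  -- the image sets have card ≤ 1
  have hsplit : ∀ i ∈ F, ∀ B C : Finset (Fin n), B ∪ C = A i → B = A i ∨ C = A i := by
    intro i hi B C hBC
    have hsup : φ.symm B ⊔ φ.symm C = u i := by
      apply φ.injective
      rw [map_sup, OrderIso.apply_symm_apply, OrderIso.apply_symm_apply]
      rw [Finset.sup_eq_union, hBC]
    have hcoesup : ((φ.symm B : I) : L) ⊔ ((φ.symm C : I) : L) = x ⊔ i := by
      have : (((φ.symm B ⊔ φ.symm C : I)) : L) = ((φ.symm B : I) : L) ⊔ ((φ.symm C : I) : L) := rfl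
      rw [← this, hsup, hucoe i hi]
    have hile : i ≤ ((φ.symm B : I) : L) ⊔ ((φ.symm C : I) : L) := by
      rw [hcoesup]; exact le_sup_right
    have hBsub : B ⊆ A i := hBC ▸ Finset.subset_union_left
    have hCsub : C ⊆ A i := hBC ▸ Finset.subset_union_right
    rcases (hprime i hi).2 hile with h | h
    · left
      have h1 : (u i : I) ≤ φ.symm B := by
        rw [← Subtype.coe_le_coe, hucoe i hi]
        exact sup_le (φ.symm B).2.1 h
      have h2 : φ.symm B ≤ u i := by
        have := φ.symm.monotone (show B ≤ A i from hBsub)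
        rwa [hA, OrderIso.symm_apply_apply] at this
      have h3 : φ.symm B = u i := le_antisymm h2 h1
      have h4 := congrArg φ h3
      rw [OrderIso.apply_symm_apply] at h4
      exact h4
    · right
      have h1 : (u i : I) ≤ φ.symm C := by
        rw [← Subtype.coe_le_coe, hucoe i hi]
        exact sup_le (φ.symm C).2.1 h
      have h2 : φ.symm C ≤ u i := by
        have := φ.symm.monotone (show C ≤ A i from hCsub)
        rwa [hA, OrderIso.symm_apply_apply] at this
      have h3 : φ.symm C = u i := le_antisymm h2 h1
      have h4 := congrArg φ h3
      rw [OrderIso.apply_symm_apply] at h4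
      exact h4
  have hcardA : ∀ i ∈ F, (A i).card ≤ 1 := by
    intro i hi
    by_contra h
    obtain ⟨k, hk, k', hk', hkk'⟩ := Finset.one_lt_card.1 (lt_of_not_ge h)
    rcases hsplit i hi ((A i).erase k) {k}
        (by rw [Finset.union_comm, ← Finset.insert_eq, Finset.insert_erase hk])
      with h | h
    · rw [← h] at hk
      exact (Finset.notMem_erase k _) hk
    · rw [← h] at hk'
      exact hkk' (Finset.mem_singleton.1 hk').symm
  -- φ of the bottom of the interval is ∅
  have hbot : φ ⟨x, hxy⟩ = ∅ := by
    have h1 : (⟨x, hxy⟩ : I) ≤ φ.symm ∅ := by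
      rw [← Subtype.coe_le_coe]
      exact (φ.symm ∅).2.1
    have := φ.monotone h1
    rw [OrderIso.apply_symm_apply] at this
    exact Finset.subset_empty.1 this
  -- the A i cover everything
  have hcover : (Finset.univ : Finset (Fin n)) ⊆ F.biUnion A := by
    set W := F.biUnion A with hW
    have hALE : ∀ i ∈ F, x ⊔ i ≤ ((φ.symm W : I) : L) := by
      intro i hi
      have h1 : (u i : I) ≤ φ.symm W := by
        have : A i ≤ W := Finset.subset_biUnion_of_mem A hi
        have := φ.symm.monotone this
        rwa [hA, OrderIso.symm_apply_apply] at this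
      have := Subtype.coe_le_coe.2 h1
      rwa [hucoe i hi] at this
    have hxyle : x ⊔ y ≤ ((φ.symm W : I) : L) := by
      refine sup_le (φ.symm W).2.1 (hyle _ fun i hi => ?_)
      exact le_trans le_sup_right (hALE i hi)
    have h2 : φ.symm Finset.univ ≤ φ.symm W := by
      rw [← Subtype.coe_le_coe]
      exact le_trans (φ.symm Finset.univ).2.2 hxyle
    have := φ.monotone h2
    rwa [OrderIso.apply_symm_apply, OrderIso.apply_symm_apply] at this
  -- Lemma A : no i in F is below x
  have hLemA : ∀ i ∈ F, ¬ i ≤ x := by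
    intro i hi hix
    have hAi : A i = ∅ := by
      have : u i = ⟨x, hxy⟩ := by
        apply Subtype.ext
        rw [hucoe i hi]
        exact sup_eq_left.2 hix
      rw [hA]
      simp only
      rw [this, hbot]
    have hcov' : (Finset.univ : Finset (Fin n)) ⊆ (F.erase i).biUnion A := by
      intro k hk
      obtain ⟨j, hj, hkj⟩ := Finset.mem_biUnion.1 (hcover hk)
      refine Finset.mem_biUnion.2 ⟨j, Finset.mem_erase.2 ⟨?_, hj⟩, hkj⟩
      rintro rfl
      rw [hAi] at hkj
      exact absurd hkj (Finset.notMem_empty k)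
    have hle1 : n ≤ ((F.erase i).biUnion A).card := by
      calc n = (Finset.univ : Finset (Fin n)).card := by simp
        _ ≤ _ := Finset.card_le_card hcov'
    have hle2 : ((F.erase i).biUnion A).card ≤ n - 1 := by
      calc ((F.erase i).biUnion A).card ≤ ∑ j ∈ F.erase i, (A j).card :=
            Finset.card_biUnion_le
        _ ≤ ∑ _j ∈ F.erase i, 1 :=
            Finset.sum_le_sum fun j hj => hcardA j (Finset.mem_of_mem_erase hj)
        _ = (F.erase i).card := by simp
        _ = n - 1 := by rw [Finset.card_erase_of_mem hi, hcard]
    have hn1 : 1 ≤ n := by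
      rw [← hcard]
      exact Finset.card_pos.2 ⟨i, hi⟩
    omega
  -- MAIN: membership detection
  have hMAIN : ∀ i ∈ F, ∀ T ⊆ F, (i ≤ x ⊔ T.sup id ↔ i ∈ T) := by
    intro i hi T hT
    constructor
    · intro h
      rcases (hprime i hi).2 h with h' | h'
      · exact absurd h' (hLemA i hi)
      · obtain ⟨j, hj, hij⟩ := ((hprime i hi).le_finset_sup).1 h'
        by_cases hij' : i = j
        · exact hij' ▸ hj
        · exact absurd hij (hinc i hi j (hT hj) hij')
    · intro h
      exact le_trans (Finset.le_sup (f := id) h) le_sup_right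
  -- injectivity of T ↦ x ⊔ sup T
  have hginj : ∀ T ⊆ F, ∀ T' ⊆ F, x ⊔ T.sup id = x ⊔ T'.sup id → T = T' := by
    intro T hT T' hT' h
    ext i
    constructor
    · intro hiT
      have hiF := hT hiT
      exact (hMAIN i hiF T' hT').1 (h ▸ (hMAIN i hiF T hT).2 hiT)
    · intro hiT
      have hiF := hT' hiT
      exact (hMAIN i hiF T hT).1 (h.symm ▸ (hMAIN i hiF T' hT').2 hiT)
  -- surjectivity onto the interval
  have hgmem : ∀ T ⊆ F, x ⊔ T.sup id ∈ I := by
    intro T hT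
    refine ⟨le_sup_left, sup_le le_sup_left ?_⟩
    exact le_trans (Finset.sup_le fun i hi => hyF i (hT hi)) le_sup_right
  have hgsurj : ∀ z : L, z ≤ x ⊔ y → ∃ T, T ⊆ F ∧ x ⊔ T.sup id = x ⊔ z := by
    set G : {T // T ∈ F.powerset} → I :=
      fun T => ⟨x ⊔ T.1.sup id, hgmem T.1 (Finset.mem_powerset.1 T.2)⟩ with hG
    have hGinj : Function.Injective G := by
      intro T T' h
      apply Subtype.ext
      exact hginj T.1 (Finset.mem_powerset.1 T.2) T'.1 (Finset.mem_powerset.1 T'.2)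
        (congrArg Subtype.val h)
    have hcards : Fintype.card {T // T ∈ F.powerset} = Fintype.card I := by
      rw [Fintype.card_coe, Finset.card_powerset, hcard,
        Fintype.card_congr φ.toEquiv, Fintype.card_finset, Fintype.card_fin]
    have hGbij : Function.Bijective G :=
      (Fintype.bijective_iff_injective_and_card G).2 ⟨hGinj, hcards⟩
    intro z hz
    obtain ⟨⟨T, hT⟩, h⟩ := hGbij.2 ⟨x ⊔ z, le_sup_left, sup_le le_sup_left hz⟩
    exact ⟨T, Finset.mem_powerset.1 hT, congrArg Subtype.val h⟩
  -- sign manipulation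
  have hsign : ∀ T ⊆ F, (-1:ℝ)^(n - T.card) = (-1)^n * (-1)^T.card := by
    intro T hT
    have hc : T.card ≤ n := hcard ▸ Finset.card_le_card hT
    have h1 : (-1:ℝ)^(n - T.card) * (-1)^T.card = (-1)^n := by
      rw [← pow_add]
      congr 1
      omega
    have h2 : ((-1:ℝ)^T.card) * ((-1)^T.card) = 1 := by
      rw [← pow_add, ← two_mul, pow_mul]
      norm_num
    calc (-1:ℝ)^(n-T.card) = (-1:ℝ)^(n-T.card) * ((-1)^T.card * (-1)^T.card) := by
          rw [h2, mul_one]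
      _ = (-1)^n * (-1)^T.card := by rw [← mul_assoc, h1]
  -- alternating sum over a powerset, real version
  have hps : ∀ s : Finset L, (∑ R ∈ s.powerset, (-1:ℝ)^R.card) = if s = ∅ then 1 else 0 := by
    intro s
    have h1 := Finset.sum_powerset_neg_one_pow_card (x := s)
    have h2 : ((∑ R ∈ s.powerset, (-1:ℤ)^R.card : ℤ) : ℝ)
        = ∑ R ∈ s.powerset, (-1:ℝ)^R.card := by
      push_cast
      rfl
    rw [← h2, h1]
    split <;> norm_num
  -- the coefficient of m z
  have hcoef : ∀ z : L,
      (∑ T ∈ F.powerset, if z ≤ x ⊔ T.sup id then (-1:ℝ)^(n - T.card) else 0)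
        = if y ≤ z ∧ z ≤ x ⊔ y then 1 else 0 := by
    intro z
    by_cases hz : z ≤ x ⊔ y
    · obtain ⟨T0, hT0F, hT0⟩ := hgsurj z hz
      have hcond : ∀ T ∈ F.powerset, (z ≤ x ⊔ T.sup id ↔ T0 ⊆ T) := by
        intro T hT
        have hTF := Finset.mem_powerset.1 hT
        constructor
        · intro h i hiT0
          have hiF := hT0F hiT0
          apply (hMAIN i hiF T hTF).1
          calc i ≤ x ⊔ T0.sup id := (hMAIN i hiF T0 hT0F).2 hiT0
            _ = x ⊔ z := hT0
            _ ≤ x ⊔ T.sup id := sup_le le_sup_left h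
        · intro h
          calc z ≤ x ⊔ z := le_sup_right
            _ = x ⊔ T0.sup id := hT0.symm
            _ ≤ x ⊔ T.sup id := sup_le le_sup_left
                (le_trans (Finset.sup_mono h) le_sup_right)
      have e : ∀ T ∈ F.powerset,
          (if z ≤ x ⊔ T.sup id then (-1:ℝ)^(n - T.card) else 0)
            = if T0 ⊆ T then (-1:ℝ)^n * (-1)^T.card else 0 := by
        intro T hT
        exact if_congr (hcond T hT) (hsign T (Finset.mem_powerset.1 hT)) rfl
      rw [Finset.sum_congr rfl e, ← Finset.sum_filter]
      have hbij : ∑ T ∈ F.powerset.filter (fun T => T0 ⊆ T), ((-1:ℝ)^n * (-1)^T.card)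
          = ∑ R ∈ (F \ T0).powerset, ((-1:ℝ)^n * ((-1)^T0.card * (-1)^R.card)) := by
        apply Finset.sum_nbij' (i := fun T => T \ T0) (j := fun R => T0 ∪ R)
        · intro T hT
          rw [Finset.mem_filter] at hT
          exact Finset.mem_powerset.2
            (Finset.sdiff_subset_sdiff (Finset.mem_powerset.1 hT.1) le_rfl)
        · intro R hR
          rw [Finset.mem_filter]
          refine ⟨Finset.mem_powerset.2 (Finset.union_subset hT0F ?_), Finset.subset_union_left⟩
          exact le_trans (Finset.mem_powerset.1 hR) (Finset.sdiff_subset)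
        · intro T hT
          rw [Finset.mem_filter] at hT
          exact Finset.union_sdiff_of_subset hT.2
        · intro R hR
          apply Finset.union_sdiff_cancel_left
          have := Finset.mem_powerset.1 hR
          exact Finset.disjoint_left.2 fun a haT0 haR =>
            (Finset.mem_sdiff.1 (this haR)).2 haT0
        · intro T hT
          rw [Finset.mem_filter] at hT
          congr 1
          rw [← pow_add]
          congr 1
          have := Finset.card_sdiff_add_card_eq_card hT.2
          omega
      rw [hbij]
      have : ∑ R ∈ (F \ T0).powerset, ((-1:ℝ)^n * ((-1)^T0.card * (-1)^R.card))
          = (-1:ℝ)^n * (-1)^T0.card * ∑ R ∈ (F \ T0).powerset, (-1:ℝ)^R.card := by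
        rw [Finset.mul_sum]
        exact Finset.sum_congr rfl fun R _ => by ring
      rw [this, hps]
      by_cases hT0F' : T0 = F
      · have hempty : F \ T0 = ∅ := by rw [hT0F']; exact Finset.sdiff_self F
        rw [if_pos hempty]
        have hyz : y ≤ z := by
          refine hyle z fun i hi => ?_
          have h1 : i ≤ x ⊔ z := by
            rw [← hT0, hT0F']
            exact (hMAIN i hi F le_rfl).2 hi
          rcases (hprime i hi).2 h1 with h' | h'
          · exact absurd h' (hLemA i hi)
          · exact h'
        rw [if_pos ⟨hyz, hz⟩, mul_one]
        rw [hT0F', hcard, ← pow_add, ← two_mul, pow_mul]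
        norm_num
      · have hnonempty : F \ T0 ≠ ∅ := by
          intro h
          exact hT0F' (le_antisymm hT0F (Finset.sdiff_eq_empty_iff_subset.1 h))
        rw [if_neg hnonempty, mul_zero]
        have hyz : ¬ y ≤ z := by
          intro hyz
          apply hT0F'
          refine le_antisymm hT0F fun i hi => ?_
          apply (hMAIN i hi T0 hT0F).1
          calc i ≤ y := hyF i hi
            _ ≤ z := hyz
            _ ≤ x ⊔ z := le_sup_right
            _ = x ⊔ T0.sup id := hT0.symm
        rw [if_neg (fun h => hyz h.1)]
    · have e : ∀ T ∈ F.powerset,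
          (if z ≤ x ⊔ T.sup id then (-1:ℝ)^(n - T.card) else 0) = 0 := by
        intro T hT
        rw [if_neg]
        intro h
        exact hz (le_trans h (hgmem T (Finset.mem_powerset.1 hT)).2)
      rw [Finset.sum_congr rfl e, Finset.sum_const, smul_zero,
        if_neg (fun h => hz h.2)]
  calc ∑ T ∈ F.powerset, (-1:ℝ)^(n - T.card) * f (x ⊔ T.sup id)
      = ∑ T ∈ F.powerset, ∑ z ∈ Finset.univ,
          (if z ≤ x ⊔ T.sup id then (-1:ℝ)^(n - T.card) * m z else 0) := by
        refine Finset.sum_congr rfl fun T hT => ?_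
        rw [hm (x ⊔ T.sup id), Finset.mul_sum, Finset.sum_filter]
    _ = ∑ z ∈ Finset.univ, ∑ T ∈ F.powerset,
          (if z ≤ x ⊔ T.sup id then (-1:ℝ)^(n - T.card) * m z else 0) := Finset.sum_comm
    _ = ∑ z ∈ Finset.univ, (if y ≤ z ∧ z ≤ x ⊔ y then 1 else 0) * m z := by
        refine Finset.sum_congr rfl fun z _ => ?_
        rw [← hcoef z, Finset.sum_mul]
        refine Finset.sum_congr rfl fun T _ => ?_
        rw [ite_mul, zero_mul]
    _ = ∑ z ∈ Finset.univ.filter (fun z => y ≤ z ∧ z ≤ x ⊔ y), m z := by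
        rw [Finset.sum_filter]
        refine Finset.sum_congr rfl fun z _ => ?_
        rw [ite_mul, one_mul, zero_mul]
end

section
/- For all integers n ≥ 1 and 0 ≤ k ≤ n−1, the combinatorial identity Σ_{i=0}^{k} (n−i−1)! · k! / (n! · (k−i)!) = 1/(n−k) holds. -/
open Nat

/-- Combinatorial identity: for `1 ≤ n` and `k ≤ n − 1`,
`Σ_{i=0}^{k} (n−i−1)!·k!/(n!·(k−i)!) = 1/(n−k)`. -/
theorem factorial_sum_identity (n k : ℕ) (hn : 1 ≤ n) (hk : k ≤ n - 1) :
    ∑ i ∈ Finset.range (k + 1),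
        (((n - i - 1)! * k ! : ℕ) : ℝ) / ((n ! * (k - i)! : ℕ) : ℝ)
      = 1 / ((n : ℝ) - (k : ℝ)) := by
  have hkn : k < n := by omega
  have hnk0 : (0:ℝ) < ((n - k : ℕ) : ℝ) := by
    have : 0 < n - k := by omega
    exact_mod_cast this
  have hfacn : (0:ℝ) < ((n ! : ℕ) : ℝ) := by exact_mod_cast n.factorial_pos
  have hfk : (0:ℝ) < ((k ! : ℕ) : ℝ) := by exact_mod_cast k.factorial_pos
  set g : ℕ → ℝ := fun i =>
    if i ≤ k then (((n - i)! * k ! : ℕ) : ℝ) / (((n - k : ℕ) : ℝ) * ((n ! * (k - i)! : ℕ) : ℝ))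
    else 0 with hg
  have hstep : ∀ i ∈ Finset.range (k + 1),
      (((n - i - 1)! * k ! : ℕ) : ℝ) / ((n ! * (k - i)! : ℕ) : ℝ) = g i - g (i + 1) := by
    intro i hi
    simp only [Finset.mem_range] at hi
    have hik : i ≤ k := by omega
    rcases eq_or_lt_of_le hik with heq | hlt
    · -- case i = k
      have hgk1 : g (i + 1) = 0 := by
        simp only [hg]; rw [if_neg (by omega)]
      have hgk : g i = (((n - i)! * k ! : ℕ) : ℝ) / (((n - k : ℕ) : ℝ) * ((n ! * (k - i)! : ℕ) : ℝ)) := by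
        simp only [hg]; rw [if_pos hik]
      rw [hgk, hgk1, sub_zero, heq, Nat.sub_self]
      have hfac : (n - k) * (n - k - 1)! = (n - k)! := Nat.mul_factorial_pred (by omega)
      rw [← hfac]
      push_cast
      field_simp
    · -- case i < k
      have hgi : g i = (((n - i)! * k ! : ℕ) : ℝ) / (((n - k : ℕ) : ℝ) * ((n ! * (k - i)! : ℕ) : ℝ)) := by
        simp only [hg]; rw [if_pos hik]
      have hgi1 : g (i + 1) = (((n - (i+1))! * k ! : ℕ) : ℝ) / (((n - k : ℕ) : ℝ) * ((n ! * (k - (i+1))! : ℕ) : ℝ)) := by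
        simp only [hg]; rw [if_pos (by omega)]
      rw [hgi, hgi1]
      obtain ⟨a, ha⟩ : ∃ a, n - i = a + 1 := ⟨n - i - 1, by omega⟩
      obtain ⟨c, hc⟩ : ∃ c, k - i = c + 1 := ⟨k - i - 1, by omega⟩
      have e1 : n - i - 1 = a := by omega
      have e2 : n - (i + 1) = a := by omega
      have e3 : k - (i + 1) = c := by omega
      have e4 : (((n - k : ℕ)) : ℝ) = (a : ℝ) - (c : ℝ) := by
        have h5 : n - k = a - c := by omega
        have h6 : c ≤ a := by omega
        rw [h5, Nat.cast_sub h6]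
      rw [e1, e2, e3, hc, ha, e4]
      have hac : (0:ℝ) < (a : ℝ) - (c : ℝ) := by
        have : c < a := by omega
        have h := Nat.cast_lt (α := ℝ) |>.mpr this
        linarith
      have hfa : (0:ℝ) < ((a ! : ℕ) : ℝ) := by exact_mod_cast a.factorial_pos
      have hfc : (0:ℝ) < ((c ! : ℕ) : ℝ) := by exact_mod_cast c.factorial_pos
      rw [Nat.factorial_succ a, Nat.factorial_succ c]
      push_cast
      field_simp
      ring
  rw [Finset.sum_congr rfl hstep, Finset.sum_range_sub']
  have hg0 : g 0 = 1 / ((n : ℝ) - (k : ℝ)) := by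
    simp only [hg]
    rw [if_pos (Nat.zero_le k)]
    rw [Nat.sub_zero, Nat.sub_zero, Nat.cast_sub (le_of_lt hkn)]
    have hp : ((n ! * k ! : ℕ) : ℝ) ≠ 0 := by positivity
    have hd : (n : ℝ) - (k : ℝ) ≠ 0 := by
      rw [← Nat.cast_sub (le_of_lt hkn)]; exact ne_of_gt hnk0
    field_simp
  have hgk1 : g (k + 1) = 0 := by
    simp only [hg]; rw [if_neg (by omega)]
  rw [hg0, hgk1, sub_zero]
end

section
/- For any finite set J with |J| ≥ 1 and v : 2^J → ℝ, the derivative decomposition identity holds: Σ_{K⊆J} (−1)^{|K|} v(J\K) − (v(J) − v(∅)) + Σ_{∅≠K⊊J} Σ_{L⊆J\K} (−1)^{|L|} v(J\(K∪L)) = 0. -/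
lemma neg_one_pow_powerset_sum {α : Type*} [DecidableEq α] (x : Finset α) :
    (∑ m ∈ x.powerset, (-1 : ℝ) ^ m.card) = if x = ∅ then 1 else 0 := by
  have h := Finset.sum_powerset_neg_one_pow_card (x := x)
  have : ((∑ m ∈ x.powerset, (-1 : ℤ) ^ m.card : ℤ) : ℝ)
      = ∑ m ∈ x.powerset, (-1 : ℝ) ^ m.card := by push_cast; rfl
  rw [← this, h]
  split <;> norm_num

open Finset in
lemma key_double_sum {α : Type*} [DecidableEq α] (J : Finset α) (v : Finset α → ℝ) :
    ∑ K ∈ J.powerset, ∑ M ∈ (J \ K).powerset, (-1 : ℝ) ^ M.card * v (J \ (K ∪ M))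
      = v J := by
  rw [Finset.sum_sigma']
  have : ∑ S ∈ J.powerset, ∑ M ∈ S.powerset, (-1 : ℝ) ^ M.card * v (J \ S) = v J := by
    have h : ∀ S ∈ J.powerset, ∑ M ∈ S.powerset, (-1 : ℝ) ^ M.card * v (J \ S)
        = (if S = ∅ then (1:ℝ) else 0) * v (J \ S) := by
      intro S _
      rw [← Finset.sum_mul, neg_one_pow_powerset_sum]
    rw [Finset.sum_congr rfl h]
    simp [Finset.sum_ite_eq', Finset.empty_mem_powerset]
  rw [← this, Finset.sum_sigma']
  refine Finset.sum_nbij' (fun p => ⟨p.1 ∪ p.2, p.2⟩) (fun p => ⟨p.1 \ p.2, p.2⟩) ?_ ?_ ?_ ?_ ?_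
  · rintro ⟨K, M⟩ hp
    simp only [Finset.mem_sigma, Finset.mem_powerset] at hp ⊢
    obtain ⟨hK, hM⟩ := hp
    exact ⟨Finset.union_subset hK (hM.trans (Finset.sdiff_subset)),
      Finset.subset_union_right⟩
  · rintro ⟨S, M⟩ hp
    simp only [Finset.mem_sigma, Finset.mem_powerset] at hp ⊢
    obtain ⟨hS, hM⟩ := hp
    constructor
    · exact (Finset.sdiff_subset).trans hS
    · intro x hx
      simp only [Finset.mem_sdiff]
      exact ⟨hS (hM hx), fun h => h.2 hx⟩
  · rintro ⟨K, M⟩ hp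
    simp only [Finset.mem_sigma, Finset.mem_powerset] at hp
    obtain ⟨hK, hM⟩ := hp
    have hd : ∀ x ∈ M, x ∉ K := fun x h => (Finset.mem_sdiff.mp (hM h)).2
    have : (K ∪ M) \ M = K := by
      ext x
      simp only [Finset.mem_sdiff, Finset.mem_union]
      have := hd x
      tauto
    simp [this]
  · rintro ⟨S, M⟩ hp
    simp only [Finset.mem_sigma, Finset.mem_powerset] at hp
    obtain ⟨hS, hM⟩ := hp
    have : (S \ M) ∪ M = S := by
      ext x
      simp only [Finset.mem_sdiff, Finset.mem_union]
      have := @hM x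
      tauto
    simp [this]
  · rintro ⟨K, M⟩ hp
    simp only [Finset.mem_sigma, Finset.mem_powerset] at hp
    rfl

/-- Derivative decomposition identity used in the recursion formula for interaction:
`Σ_{K⊆J} (−1)^{|K|} v(J\K) − (v(J) − v(∅)) + Σ_{∅≠K⊊J} Σ_{L⊆J\K} (−1)^{|L|} v(J\(K∪L)) = 0`. -/
theorem derivative_decomposition_identity {α : Type*} [DecidableEq α]
    (J : Finset α) (hJ : J.Nonempty) (v : Finset α → ℝ) :
    (∑ K ∈ J.powerset, (-1 : ℝ) ^ K.card * v (J \ K)) - (v J - v ∅)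
        + ∑ K ∈ J.powerset.filter (fun K => K ≠ ∅ ∧ K ≠ J),
            ∑ M ∈ (J \ K).powerset, (-1 : ℝ) ^ M.card * v (J \ (K ∪ M)) = 0 := by
  set f : Finset α → ℝ := fun K => ∑ M ∈ (J \ K).powerset, (-1 : ℝ) ^ M.card * v (J \ (K ∪ M))
    with hf
  have hsplit := Finset.sum_filter_add_sum_filter_not J.powerset
    (fun K => K ≠ ∅ ∧ K ≠ J) f
  have hcompl : J.powerset.filter (fun K => ¬(K ≠ ∅ ∧ K ≠ J)) = {∅, J} := by
    ext K
    simp only [Finset.mem_filter, Finset.mem_powerset, Finset.mem_insert,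
      Finset.mem_singleton, not_and_or, not_not]
    constructor
    · rintro ⟨_, h | h⟩ <;> tauto
    · rintro (rfl | rfl) <;> simp
  have hne : (∅ : Finset α) ≠ J := fun h => by
    rcases hJ with ⟨x, hx⟩; rw [← h] at hx; exact absurd hx (Finset.notMem_empty x)
  have hpair : ∑ K ∈ ({∅, J} : Finset (Finset α)), f K = f ∅ + f J :=
    Finset.sum_pair hne
  have hf0 : f ∅ = ∑ K ∈ J.powerset, (-1 : ℝ) ^ K.card * v (J \ K) := by
    simp [hf]
  have hfJ : f J = v ∅ := by
    simp [hf]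
  have htot : ∑ K ∈ J.powerset, f K = v J := key_double_sum J v
  rw [hcompl, hpair, htot, hf0, hfJ] at hsplit
  linarith [hsplit]
end

section
/- If the Shapley-type coefficients satisfy β_k = 1/k for k = 1,…,n and are related to coefficients α_k (for single join-irreducible elements, |K| = 1) by β_k = Σ_{l=0}^{n−k} C(n−k, l) · α_{k−1+l}, then α_k = (n−1−k)! · k! / n! for k = 0,…,n−1. -/
open Nat

/-- Hockey stick identity. -/
lemma hockey (k m : ℕ) :
    ∑ l ∈ Finset.range (m + 1), (k + l).choose l = (k + m + 1).choose m := by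
  induction m with
  | zero => simp
  | succ m ih =>
      rw [Finset.sum_range_succ, ih]
      have : k + (m + 1) + 1 = (k + m + 1) + 1 := by ring
      rw [this, Nat.choose_succ_succ' (k + m + 1) m]
      ring_nf

lemma term_eq (k m l : ℕ) (hl : l ≤ m) :
    m.choose l * ((m - l)! * (k + l)!) = m ! * (k ! * (k + l).choose l) := by
  have h1 : m.choose l * l ! * (m - l)! = m ! := Nat.choose_mul_factorial_mul_factorial hl
  have h2 : (k + l).choose l * l ! * (k + l - l)! = (k + l)! :=
    Nat.choose_mul_factorial_mul_factorial (Nat.le_add_left l k)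
  have h2' : (k + l).choose l * l ! * k ! = (k + l)! := by simpa using h2
  apply Nat.eq_of_mul_eq_mul_right (Nat.factorial_pos l)
  calc m.choose l * ((m - l)! * (k + l)!) * l !
      = (m.choose l * l ! * (m - l)!) * (k + l)! := by ring
    _ = m ! * (k + l)! := by rw [h1]
    _ = m ! * ((k + l).choose l * l ! * k !) := by rw [h2']
    _ = m ! * (k ! * (k + l).choose l) * l ! := by ring

lemma nat_sum (k m : ℕ) :
    ∑ l ∈ Finset.range (m + 1), m.choose l * ((m - l)! * (k + l)!)
      = m ! * k ! * (k + m + 1).choose m := by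
  have : ∀ l ∈ Finset.range (m + 1),
      m.choose l * ((m - l)! * (k + l)!) = m ! * k ! * (k + l).choose l := by
    intro l hl
    rw [term_eq k m l (by simpa using Nat.lt_succ_iff.mp (Finset.mem_range.mp hl))]
    ring
  rw [Finset.sum_congr rfl this, ← Finset.mul_sum, hockey]

/-- If the Shapley-type coefficients `β_k = 1/k` (k = 1,…,n) are related to `α_k` by
`β_k = Σ_{l=0}^{n−k} C(n−k, l) · α_{k−1+l}`, then `α_k = (n−1−k)!·k!/n!` for
`k = 0,…,n−1`. -/
theorem shapley_coefficients (n : ℕ) (hn : 1 ≤ n) (α : ℕ → ℝ)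
    (h : ∀ k : ℕ, 1 ≤ k → k ≤ n →
      (1 : ℝ) / (k : ℝ)
        = ∑ l ∈ Finset.range (n - k + 1), ((n - k).choose l : ℝ) * α (k - 1 + l)) :
    ∀ k : ℕ, k ≤ n - 1 → α k = ((n - 1 - k)! * k ! : ℕ) / (n ! : ℝ) := by
  set g : ℕ → ℝ := fun k => ((n - 1 - k)! * k ! : ℕ) / (n ! : ℝ) with hg
  have hnpos : (0 : ℝ) < (n ! : ℝ) := by exact_mod_cast Nat.factorial_pos n
  -- key: the candidate solution satisfies each equation
  have key : ∀ k : ℕ, k + 1 ≤ n →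
      (1 : ℝ) / ((k : ℝ) + 1)
        = ∑ l ∈ Finset.range (n - k), ((n - 1 - k).choose l : ℝ) * g (k + l) := by
    intro k hk
    set m := n - 1 - k with hm
    have hmk : n - k = m + 1 := by omega
    have hn' : n = k + m + 1 := by omega
    have sum_eq : ∑ l ∈ Finset.range (n - k), ((n - 1 - k).choose l : ℝ) * g (k + l)
        = (↑(∑ l ∈ Finset.range (m + 1), m.choose l * ((m - l)! * (k + l)!)) : ℝ)
            / (n ! : ℝ) := by
      rw [hmk, Nat.cast_sum, Finset.sum_div]
      apply Finset.sum_congr rfl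
      intro l hl
      have hl' : l ≤ m := by simpa using Nat.lt_succ_iff.mp (Finset.mem_range.mp hl)
      have : n - 1 - (k + l) = m - l := by omega
      simp only [hg, this]
      push_cast
      ring
    rw [sum_eq, nat_sum, ← hn']
    have hmn : m ≤ n := by omega
    have hnat : m ! * k ! * n.choose m * (k + 1) = n ! := by
      have h1 : n.choose m * m ! * (n - m)! = n ! :=
        Nat.choose_mul_factorial_mul_factorial hmn
      have h2 : n - m = k + 1 := by omega
      rw [h2] at h1
      calc m ! * k ! * n.choose m * (k + 1)
          = n.choose m * m ! * ((k + 1) * k !) := by ring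
        _ = n.choose m * m ! * (k + 1)! := by rw [Nat.factorial_succ]
        _ = n ! := h1
    have hk1 : (0 : ℝ) < (k : ℝ) + 1 := by positivity
    field_simp
    exact_mod_cast (mul_comm (m ! * k ! * n.choose m) (k + 1) ▸ hnat).symm
  -- triangular downward induction
  have main : ∀ j : ℕ, ∀ k : ℕ, k ≤ n - 1 → n - 1 - k = j → α k = g k := by
    intro j
    induction j using Nat.strong_induction_on with
    | _ j ih =>
      intro k hk hj
      have hk1 : k + 1 ≤ n := by omega
      have e1 : (1 : ℝ) / ((k : ℝ) + 1)
          = ∑ l ∈ Finset.range (n - k), ((n - 1 - k).choose l : ℝ) * α (k + l) := by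
        have := h (k + 1) (by omega) hk1
        have h1 : n - (k + 1) + 1 = n - k := by omega
        have h2 : n - (k + 1) = n - 1 - k := by omega
        rw [h1, h2] at this
        simpa using this
      have e2 := key k hk1
      have hmk : n - k = (n - 1 - k) + 1 := by omega
      rw [hmk, Finset.sum_range_succ'] at e1 e2
      have tails : ∑ l ∈ Finset.range (n - 1 - k), ((n - 1 - k).choose (l + 1) : ℝ) * α (k + (l + 1))
          = ∑ l ∈ Finset.range (n - 1 - k), ((n - 1 - k).choose (l + 1) : ℝ) * g (k + (l + 1)) := by
        apply Finset.sum_congr rfl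
        intro l hl
        have hl' : l < n - 1 - k := Finset.mem_range.mp hl
        have := ih (n - 1 - (k + (l + 1))) (by omega) (k + (l + 1)) (by omega) rfl
        rw [this]
      rw [tails] at e1
      have : ((n - 1 - k).choose 0 : ℝ) * α (k + 0)
          = ((n - 1 - k).choose 0 : ℝ) * g (k + 0) := by linarith [e1, e2]
      simpa using this
  intro k hk
  exact main (n - 1 - k) k hk rfl
end

section
/- Let L be a finite distributive lattice and f : L → ℝ. If m is the Möbius transform of f, then for any join-irreducible i such that x∨i covers x, the interval ↓(x∨i) \ ↓x equals [i, x∨i] = {y : i ≤ y ≤ x∨i}. -/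
open scoped Classical
/-- In a finite distributive lattice, if `m` is the Möbius transform of `f` and `i` is
join-irreducible with `x ⊔ i` covering `x`, then `↓(x ⊔ i) \ ↓x = [i, x ⊔ i]`. -/
theorem ideal_diff_eq_interval (L : Type*) [DistribLattice L] [Fintype L]
    (f m : L → ℝ)
    (hm : ∀ x : L, f x = ∑ y ∈ Finset.univ.filter (fun y => y ≤ x), m y)
    (i x : L) (hi : SupIrred i) (hcov : x ⋖ x ⊔ i) :
    {y : L | y ≤ x ⊔ i} \ {y : L | y ≤ x} = Set.Icc i (x ⊔ i) := by
  have hix : ¬ i ≤ x := fun h => hcov.lt.ne (le_antisymm le_sup_left (sup_le le_rfl h))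
  ext y
  simp only [Set.mem_diff, Set.mem_setOf_eq, Set.mem_Icc]
  constructor
  · rintro ⟨hy, hny⟩
    refine ⟨?_, hy⟩
    have hx : x ⊔ y = x ⊔ i := by
      rcases hcov.eq_or_eq (le_sup_left : x ≤ x ⊔ y) (sup_le le_sup_left hy) with h | h
      · exact absurd (le_sup_right.trans h.le) hny
      · exact h
    have : i = (i ⊓ x) ⊔ (i ⊓ y) := by
      rw [← inf_sup_left, hx, inf_eq_left.2 le_sup_right]
    rcases hi.2 this.symm with h | h
    · exact absurd (inf_eq_left.1 h) hix
    · exact inf_eq_left.1 h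
  · rintro ⟨hiy, hy⟩
    exact ⟨hy, fun h => hix (hiy.trans h)⟩
end
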